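/- Monotonicity of the socially optimal noise rate in average revenue: the zero point x° of h(x) = (w̄/d̄) g'(x̄) - f'(x) (where x̄ is evaluated consistently with the threshold structure) is nonincreasing in w̄ and nondecreasing in d̄. -/

import Mathlib

lemma antitone_deriv_nonpos {g : ℝ → ℝ} (hgd : Differentiable ℝ g) (hg : Antitone g)
    (x : ℝ) : deriv g x ≤ 0 := by
  have h := (hgd x).hasDerivAt
  have ht : Filter.Tendsto (slope g x) (nhdsWithin x (Set.Ioi x)) (nhds (deriv g x)) :=
    (hasDerivAt_iff_tendsto_slope.mp h).mono_left
      (nhdsWithin_mono x (fun y hy => ne_of_gt hy))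
  refine le_of_tendsto ht ?_
  filter_upwards [self_mem_nhdsWithin] with y hy
  have : g y ≤ g x := hg (le_of_lt hy)
  rw [slope_def_field]
  exact div_nonpos_of_nonpos_of_nonneg (by linarith) (by simpa using sub_nonneg.2 (Set.mem_Ioi.mp hy).le)

/-- Monotonicity of the socially optimal noise rate: the zero point of
`h(x) = (w̄/d̄) g'(x̄(x)) - f'(x)` is nonincreasing in `w̄` and nondecreasing in `d̄`. -/
theorem swm_zero_point_monotone (g f : ℝ → ℝ)
    (hgd : Differentiable ℝ g) (hfd : Differentiable ℝ f)
    (hg : ConcaveOn ℝ Set.univ g) (hg' : Antitone g)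
    (hf : StrictConvexOn ℝ Set.univ f) (hf' : Antitone f)
    (ε : ℝ) (hε : 0 < ε)
    (xbar : ℝ → ℝ) (hxbar : Monotone xbar)
    (h : ℝ → ℝ → ℝ → ℝ)
    (hh : h = fun wbar dbar x => (wbar / dbar) * deriv g (xbar x) - deriv f x) :
    (∀ w₁ w₂ dbar x₁ x₂, 0 < w₁ → w₁ ≤ w₂ → 0 < dbar →
      x₁ ∈ Set.Ioo 0 ε → x₂ ∈ Set.Ioo 0 ε →
      h w₁ dbar x₁ = 0 → h w₂ dbar x₂ = 0 → x₂ ≤ x₁)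
    ∧ (∀ wbar d₁ d₂ x₁ x₂, 0 < wbar → 0 < d₁ → d₁ ≤ d₂ →
      x₁ ∈ Set.Ioo 0 ε → x₂ ∈ Set.Ioo 0 ε →
      h wbar d₁ x₁ = 0 → h wbar d₂ x₂ = 0 → x₁ ≤ x₂) := by
  subst hh
  have hFmono : StrictMonoOn (deriv f) Set.univ :=
    hf.strictMonoOn_deriv (fun x _ => hfd x)
  have hGanti : AntitoneOn (deriv g) Set.univ :=
    hg.antitoneOn_deriv (fun x _ => hgd x)
  have hGnp : ∀ x, deriv g x ≤ 0 := antitone_deriv_nonpos hgd hg'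
  constructor
  · intro w₁ w₂ dbar x₁ x₂ hw₁ hw hd _ _ h1 h2
    by_contra hlt
    push_neg at hlt
    have hF : deriv f x₁ < deriv f x₂ :=
      hFmono (Set.mem_univ _) (Set.mem_univ _) hlt
    have e1 : (w₁ / dbar) * deriv g (xbar x₁) = deriv f x₁ := by
      simp only at h1; linarith
    have e2 : (w₂ / dbar) * deriv g (xbar x₂) = deriv f x₂ := by
      simp only at h2; linarith
    have hga : deriv g (xbar x₂) ≤ deriv g (xbar x₁) :=
      hGanti (Set.mem_univ _) (Set.mem_univ _) (hxbar hlt.le)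
    have hwd : (0:ℝ) ≤ w₂ / dbar := div_nonneg (by linarith) hd.le
    have s1 : (w₂ / dbar) * deriv g (xbar x₂) ≤ (w₂ / dbar) * deriv g (xbar x₁) :=
      mul_le_mul_of_nonneg_left hga hwd
    have s2 : (w₂ / dbar) * deriv g (xbar x₁) ≤ (w₁ / dbar) * deriv g (xbar x₁) :=
      mul_le_mul_of_nonpos_right (by gcongr) (hGnp _)
    linarith
  · intro wbar d₁ d₂ x₁ x₂ hw hd₁ hd h1m _ h1 h2
    by_contra hlt
    push_neg at hlt
    have hF : deriv f x₂ < deriv f x₁ :=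
      hFmono (Set.mem_univ _) (Set.mem_univ _) hlt
    have e1 : (wbar / d₁) * deriv g (xbar x₁) = deriv f x₁ := by
      simp only at h1; linarith
    have e2 : (wbar / d₂) * deriv g (xbar x₂) = deriv f x₂ := by
      simp only at h2; linarith
    have hga : deriv g (xbar x₁) ≤ deriv g (xbar x₂) :=
      hGanti (Set.mem_univ _) (Set.mem_univ _) (hxbar hlt.le)
    have hd₂ : (0:ℝ) < d₂ := lt_of_lt_of_le hd₁ hd
    have hdiv : wbar / d₂ ≤ wbar / d₁ := div_le_div_of_nonneg_left hw.le hd₁ hd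
    have s1 : (wbar / d₁) * deriv g (xbar x₁) ≤ (wbar / d₂) * deriv g (xbar x₁) :=
      mul_le_mul_of_nonpos_right hdiv (hGnp _)
    have s2 : (wbar / d₂) * deriv g (xbar x₁) ≤ (wbar / d₂) * deriv g (xbar x₂) :=
      mul_le_mul_of_nonneg_left hga (by positivity)
    linarith
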